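/- arXiv:1912.05485 — 5 statements merged into one kernel-verified Lean document; each statement's English description precedes it below -/
import Mathlib

section
/- Let a ∈ B^n and x ∈ S^{n-1}. Then the point φ_a(-φ_a(x)) lies on S^{n-1}, lies on the straight line through x and a (it is the second intersection point of that line with S^{n-1}), and is given explicitly by φ_a(-φ_a(x)) = x + 2((1 - ⟨x,a⟩)/‖a - x‖²)(a - x). -/
open Metric

noncomputable section

/-- The involutive automorphism `φ_a` of the closed unit ball:
`φ_a(x) = (a - P_a x - √(1-‖a‖²)·Q_a x)/(1 - ⟨x,a⟩)`, where `P_a` is the orthogonal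
projection onto the span of `a` and `Q_a = id - P_a` (for `a = 0` the formula gives
`φ_0(x) = -x`, since division by `‖0‖² = 0` yields `P_0 x = 0`). -/
def phiAut {n : ℕ} (a x : EuclideanSpace ℝ (Fin n)) : EuclideanSpace ℝ (Fin n) :=
  (1 - (inner ℝ x a : ℝ))⁻¹ •
    (a - ((inner ℝ a x : ℝ) / ‖a‖ ^ 2) • a
      - Real.sqrt (1 - ‖a‖ ^ 2) • (x - ((inner ℝ a x : ℝ) / ‖a‖ ^ 2) • a))

lemma phi_key {n : ℕ} (a x : EuclideanSpace ℝ (Fin n))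
    (ha1 : ‖a‖ < 1) (hx1 : ‖x‖ = 1) :
    phiAut a (-(phiAut a x))
      = x + (2 * (1 - (inner ℝ x a : ℝ)) / ‖a - x‖ ^ 2) • (a - x) := by
  rcases eq_or_ne a 0 with rfl | ha0
  · have h0 : phiAut (0 : EuclideanSpace ℝ (Fin n)) x = -x := by
      simp [phiAut]
    rw [h0, neg_neg, h0]
    have hn : ‖(0 : EuclideanSpace ℝ (Fin n)) - x‖ ^ 2 = 1 := by
      rw [zero_sub, norm_neg, hx1]; norm_num
    rw [hn]
    have hi : (inner ℝ x (0 : EuclideanSpace ℝ (Fin n)) : ℝ) = 0 := inner_zero_right x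
    rw [hi]
    match_scalars <;> norm_num
  · have hc1 : (inner ℝ x a : ℝ) < 1 := by
      calc (inner ℝ x a : ℝ) ≤ ‖x‖ * ‖a‖ := real_inner_le_norm x a
      _ = ‖a‖ := by rw [hx1, one_mul]
      _ < 1 := ha1
    set c : ℝ := (inner ℝ x a : ℝ) with hc
    have hne : (1:ℝ) - c ≠ 0 := by intro h; nlinarith
    have hca : (inner ℝ a x : ℝ) = c := (real_inner_comm a x).symm.trans hc.symm
    set s : ℝ := Real.sqrt (1 - ‖a‖^2) with hs
    have hs2 : s^2 = 1 - ‖a‖^2 := Real.sq_sqrt (by nlinarith [norm_nonneg a])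
    have hα : ‖a‖^2 = 1 - s^2 := by rw [hs2]; ring
    have hαne : (1:ℝ) - s^2 ≠ 0 := by
      rw [← hα]; exact pow_ne_zero 2 (norm_ne_zero_iff.mpr ha0)
    have hax : ‖a - x‖^2 = 2 - s^2 - 2*c := by
      rw [norm_sub_sq_real, hx1, hca, hα]; ring
    have hD : (2:ℝ) - s^2 - 2*c ≠ 0 := by
      rw [← hax]
      have hne2 : a - x ≠ 0 := by
        intro h
        have : a = x := by rwa [sub_eq_zero] at h
        rw [this, hx1] at ha1; exact lt_irrefl _ ha1
      exact pow_ne_zero 2 (norm_ne_zero_iff.mpr hne2)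
    have hy : phiAut a x = ((1-c)⁻¹ * (1 - c/(1-s^2) + s*(c/(1-s^2)))) • a
          + (-((1-c)⁻¹ * s)) • x := by
      rw [phiAut, hca, ← hc, ← hs, hα]
      module
    have hz : (inner ℝ (-(phiAut a x)) a : ℝ) = (c - (1 - s^2))/(1 - c) := by
      rw [hy]
      simp only [inner_neg_left, inner_add_left, real_inner_smul_left,
        real_inner_self_eq_norm_sq, ← hc, hα]
      field_simp
      ring
    have hz' : (inner ℝ a (-(phiAut a x)) : ℝ) = (c - (1 - s^2))/(1 - c) := by
      rw [real_inner_comm]; exact hz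
    have hlead : (1 - (c - (1 - s^2))/(1 - c))⁻¹ = (1 - c)/(2 - s^2 - 2*c) := by
      rw [show 1 - (c - (1 - s^2))/(1 - c) = (2 - s^2 - 2*c)/(1 - c) from by
        field_simp; ring, inv_div]
    conv_lhs => rw [phiAut, ← hs, hz, hz', hα, hy, hlead]
    rw [hax]
    match_scalars
    · field_simp
      ring
    · have hD' : (2:ℝ) - s^2 - c*2 ≠ 0 := by rw [mul_comm]; exact hD
      field_simp
      ring

theorem phi_neg_phi_eq_tau
    {n : ℕ} (hn : 2 ≤ n) (a x : EuclideanSpace ℝ (Fin n))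
    (ha : a ∈ ball (0 : EuclideanSpace ℝ (Fin n)) 1)
    (hx : x ∈ sphere (0 : EuclideanSpace ℝ (Fin n)) 1) :
    ‖phiAut a (-(phiAut a x))‖ = 1 ∧
    (∃ t : ℝ, phiAut a (-(phiAut a x)) = x + t • (a - x)) ∧
    phiAut a (-(phiAut a x))
      = x + (2 * (1 - (inner ℝ x a : ℝ)) / ‖a - x‖ ^ 2) • (a - x) := by
  have ha1 : ‖a‖ < 1 := by simpa using ha
  have hx1 : ‖x‖ = 1 := by simpa using hx
  have key := phi_key a x ha1 hx1
  refine ⟨?_, ⟨_, key⟩, key⟩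
  rw [key]
  have hne2 : a - x ≠ 0 := by
    intro h
    have : a = x := by rwa [sub_eq_zero] at h
    rw [this, hx1] at ha1; exact lt_irrefl _ ha1
  have haxne : ‖a - x‖ ^ 2 ≠ 0 := pow_ne_zero 2 (norm_ne_zero_iff.mpr hne2)
  have hxa : (inner ℝ x (a - x) : ℝ) = (inner ℝ x a : ℝ) - 1 := by
    rw [inner_sub_right, real_inner_self_eq_norm_sq, hx1]; norm_num
  set c : ℝ := (inner ℝ x a : ℝ) with hc
  set d : ℝ := ‖a - x‖ ^ 2 with hd
  set t : ℝ := 2 * (1 - c) / d with ht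
  have hsq : ‖x + t • (a - x)‖ ^ 2 = 1 := by
    rw [norm_add_sq_real, norm_smul, real_inner_smul_right, hxa, hx1,
      Real.norm_eq_abs, mul_pow, sq_abs, ← hd, ht]
    field_simp
    ring
  have := Real.sqrt_sq (norm_nonneg (x + t • (a - x)))
  rw [← this, hsq, Real.sqrt_one]
end
end

section
/- Let a ∈ B^n, let k ≥ 1 be an integer, and set J_a(y) = (√(1-‖a‖²)/(1 - ⟨y,a⟩))^{k-1}. Then for every x ∈ S^{n-1}, J_a(-φ_a(x)) / J_a(φ_a(x)) = ((1-‖a‖²)/‖x - a‖²)^{k-1}. -/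
open Metric

noncomputable section

/-- The Jacobian factor `J_a(y) = (√(1-‖a‖²)/(1 - ⟨y,a⟩))^{k-1}`. -/
def Jfun {n : ℕ} (k : ℕ) (a y : EuclideanSpace ℝ (Fin n)) : ℝ :=
  (Real.sqrt (1 - ‖a‖ ^ 2) / (1 - (inner ℝ y a : ℝ))) ^ (k - 1)

theorem jacobian_ratio
    {n k : ℕ} (hn : 2 ≤ n) (hk : 1 ≤ k) (a : EuclideanSpace ℝ (Fin n))
    (ha : a ∈ ball (0 : EuclideanSpace ℝ (Fin n)) 1) :
    ∀ x ∈ sphere (0 : EuclideanSpace ℝ (Fin n)) 1,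
      Jfun k a (-(phiAut a x)) / Jfun k a (phiAut a x)
        = ((1 - ‖a‖ ^ 2) / ‖x - a‖ ^ 2) ^ (k - 1) := by
  intro x hx
  have hx1 : ‖x‖ = 1 := by simpa using hx
  have ha1 : ‖a‖ < 1 := by simpa using ha
  set t : ℝ := inner ℝ x a with ht
  have htle : |t| < 1 := by
    calc |t| ≤ ‖x‖ * ‖a‖ := abs_real_inner_le_norm x a
    _ < 1 := by rw [hx1]; simpa using ha1
  have h1t : (0:ℝ) < 1 - t := by
    have := (abs_lt.mp htle).2; linarith
  have ha2 : (0:ℝ) < 1 - ‖a‖ ^ 2 := by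
    nlinarith [norm_nonneg a]
  have hs : (0:ℝ) < Real.sqrt (1 - ‖a‖ ^ 2) := Real.sqrt_pos.mpr ha2
  have hxa : ‖x - a‖ ^ 2 = 1 - 2 * t + ‖a‖ ^ 2 := by
    rw [norm_sub_sq_real, hx1, ← ht]; ring
  have hta : |t| ≤ ‖a‖ := by
    have := abs_real_inner_le_norm x a
    rwa [hx1, one_mul] at this
  have hxapos : (0:ℝ) < ‖x - a‖ ^ 2 := by
    rw [hxa]; nlinarith [(abs_le.mp hta).1, (abs_le.mp hta).2]
  have hinner : (inner ℝ (phiAut a x) a : ℝ) = (‖a‖ ^ 2 - t) / (1 - t) := by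
    by_cases h0 : a = 0
    · simp [phiAut, h0, ht]
    · have hna : ‖a‖ ≠ 0 := norm_ne_zero_iff.mpr h0
      have hax : (inner ℝ a x : ℝ) = t := real_inner_comm x a
      simp only [phiAut, real_inner_smul_left, inner_sub_left,
        real_inner_self_eq_norm_sq, hax, ← ht]
      field_simp
      try ring
  have h1c : 1 - (inner ℝ (phiAut a x) a : ℝ) = (1 - ‖a‖ ^ 2) / (1 - t) := by
    rw [hinner]; field_simp; try ring
  have h2c : 1 - (inner ℝ (-(phiAut a x)) a : ℝ) = ‖x - a‖ ^ 2 / (1 - t) := by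
    rw [inner_neg_left, hinner, hxa]
    field_simp
    try ring
  rw [Jfun, Jfun, h1c, h2c, ← div_pow]
  congr 1
  field_simp
  try ring
end
end

section
/- Let E₀ ⊂ ℝⁿ be a k-dimensional linear subspace (1 ≤ k < n), let a ∈ B^n, and let a′ be the orthogonal projection of a onto E₀. Then for every x ∈ E₀ with ‖x‖ = 1, ‖φ_a(x) - φ_a(a′)‖² = (1-‖a‖²)/(1-‖a′‖²). In particular, φ_a(E₀ ∩ S^{n-1}) is contained in the sphere of center c = φ_a(a′) and radius r = √((1-‖a‖²)/(1-‖a′‖²)). -/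
open Metric Module

noncomputable section

open RealInnerProductSpace in
lemma phiAut_key {n : ℕ} (a x y : EuclideanSpace ℝ (Fin n)) (ha : ‖a‖ < 1)
    (hx : ⟪x, a⟫ ≠ 1) (hy : ⟪y, a⟫ ≠ 1) :
    (1 - ⟪x, a⟫) * (1 - ⟪y, a⟫) * (1 - ⟪phiAut a x, phiAut a y⟫)
      = (1 - ‖a‖ ^ 2) * (1 - ⟪x, y⟫) := by
  have hA1 : ‖a‖ ^ 2 ≤ 1 := by nlinarith [norm_nonneg a]
  have hs : Real.sqrt (1 - ‖a‖ ^ 2) ^ 2 = 1 - ‖a‖ ^ 2 :=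
    Real.sq_sqrt (by linarith)
  by_cases h0 : a = 0
  · subst h0
    simp [phiAut, inner_neg_neg, real_inner_comm y x]
  · have hA : (0:ℝ) < ‖a‖ ^ 2 := by
      have := norm_pos_iff.mpr h0
      positivity
    rw [real_inner_comm a x] at hx
    rw [real_inner_comm a y] at hy
    have hdx : (1 - ⟪a, x⟫) ≠ 0 := sub_ne_zero.mpr (Ne.symm hx)
    have hdy : (1 - ⟪a, y⟫) ≠ 0 := sub_ne_zero.mpr (Ne.symm hy)
    unfold phiAut
    simp only [real_inner_smul_left, real_inner_smul_right, inner_sub_left,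
      inner_sub_right, real_inner_self_eq_norm_sq]
    rw [real_inner_comm a x, real_inner_comm a y, real_inner_comm y x]
    generalize hsd : Real.sqrt (1 - ‖a‖ ^ 2) = s at hs
    generalize hAd : (‖a‖:ℝ) ^ 2 = A at hs hA
    generalize hα : (inner ℝ a x : ℝ) = α at hdx
    generalize hβ : (inner ℝ a y : ℝ) = β at hdy
    generalize hγ : (inner ℝ y x : ℝ) = γ
    field_simp
    ring_nf
    rw [hs]
    ring

open RealInnerProductSpace in
theorem image_of_linear_section_center_radius
    {n k : ℕ} (hn : 2 ≤ n) (hk1 : 1 ≤ k) (hkn : k < n)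
    (E₀ : Submodule ℝ (EuclideanSpace ℝ (Fin n))) (hE₀ : finrank ℝ E₀ = k)
    (a : EuclideanSpace ℝ (Fin n)) (ha : a ∈ ball (0 : EuclideanSpace ℝ (Fin n)) 1) :
    (∀ x ∈ (E₀ : Set (EuclideanSpace ℝ (Fin n))), ‖x‖ = 1 →
        ‖phiAut a x - phiAut a ((E₀.orthogonalProjectionOnto a : EuclideanSpace ℝ (Fin n)))‖ ^ 2
          = (1 - ‖a‖ ^ 2) / (1 - ‖(E₀.orthogonalProjectionOnto a : EuclideanSpace ℝ (Fin n))‖ ^ 2)) ∧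
      phiAut a '' ((E₀ : Set (EuclideanSpace ℝ (Fin n))) ∩ sphere 0 1) ⊆
        sphere (phiAut a ((E₀.orthogonalProjectionOnto a : EuclideanSpace ℝ (Fin n))))
          (Real.sqrt ((1 - ‖a‖ ^ 2) /
            (1 - ‖(E₀.orthogonalProjectionOnto a : EuclideanSpace ℝ (Fin n))‖ ^ 2))) := by
  have haN : ‖a‖ < 1 := by simpa using mem_ball_iff_norm.mp ha
  set a' : EuclideanSpace ℝ (Fin n) := (E₀.orthogonalProjectionOnto a : EuclideanSpace ℝ (Fin n))
    with ha'
  -- inner products with a and a' agree on E₀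
  have hinner : ∀ v ∈ E₀, ⟪v, a⟫ = ⟪v, a'⟫ := by
    intro v hv
    have h0 : ⟪a - a', v⟫ = 0 := Submodule.starProjection_inner_eq_zero (K := E₀) a v hv
    rw [inner_sub_left] at h0
    rw [real_inner_comm a v, real_inner_comm a' v]
    linarith
  have ha'mem : a' ∈ E₀ := (E₀.orthogonalProjectionOnto a).2
  -- norm of a' is at most norm of a
  have ha'le : ‖a'‖ ≤ ‖a‖ := by
    have hp : ⟪a - a', a'⟫ = 0 := Submodule.starProjection_inner_eq_zero (K := E₀) a a' ha'mem
    have : ‖a' + (a - a')‖ ^ 2 = ‖a'‖ ^ 2 + ‖a - a'‖ ^ 2 := by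
      rw [norm_add_sq_real, real_inner_comm (a - a') a', hp]; ring
    have h2 : ‖a‖ ^ 2 = ‖a'‖ ^ 2 + ‖a - a'‖ ^ 2 := by
      simpa using this
    nlinarith [norm_nonneg a, norm_nonneg a', sq_nonneg ‖a - a'‖]
  have ha'N : ‖a'‖ < 1 := lt_of_le_of_lt ha'le haN
  have haa' : ⟪a', a⟫ = ‖a'‖ ^ 2 := by
    rw [hinner a' ha'mem, real_inner_self_eq_norm_sq]
  have hD' : (0:ℝ) < 1 - ‖a'‖ ^ 2 := by nlinarith [norm_nonneg a']
  have ha'ne : ⟪a', a⟫ ≠ 1 := by rw [haa']; nlinarith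
  -- the main computation
  have main : ∀ x ∈ (E₀ : Set (EuclideanSpace ℝ (Fin n))), ‖x‖ = 1 →
      ‖phiAut a x - phiAut a a'‖ ^ 2 = (1 - ‖a‖ ^ 2) / (1 - ‖a'‖ ^ 2) := by
    intro x hx hx1
    have hxa : ⟪x, a⟫ ≠ 1 := by
      have := abs_real_inner_le_norm x a
      intro h
      rw [h] at this
      simp only [abs_one, hx1, one_mul] at this
      linarith
    have hdx : (1 - ⟪x, a⟫) ≠ 0 := sub_ne_zero.mpr (Ne.symm hxa)
    have hD'ne : (1 - ‖a'‖ ^ 2) ≠ 0 := by linarith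
    have K1 := phiAut_key a x x haN hxa hxa
    have hxx : ⟪x, x⟫ = (1:ℝ) := by rw [real_inner_self_eq_norm_sq, hx1]; norm_num
    rw [hxx] at K1
    have K2 := phiAut_key a a' a' haN ha'ne ha'ne
    have ha'a' : ⟪a', a'⟫ = ‖a'‖ ^ 2 := real_inner_self_eq_norm_sq a'
    rw [ha'a', haa'] at K2
    have K3 := phiAut_key a x a' haN hxa ha'ne
    rw [haa', ← hinner x hx] at K3
    rw [norm_sub_sq_real, ← real_inner_self_eq_norm_sq (phiAut a x),
      ← real_inner_self_eq_norm_sq (phiAut a a')]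
    generalize ht1 : (⟪phiAut a x, phiAut a x⟫ : ℝ) = t1 at K1 ⊢
    generalize ht2 : (⟪phiAut a a', phiAut a a'⟫ : ℝ) = t2 at K2 ⊢
    generalize ht3 : (⟪phiAut a x, phiAut a a'⟫ : ℝ) = t3 at K3 ⊢
    generalize hα : (⟪x, a⟫ : ℝ) = α at K1 K3 hdx
    generalize hB : (‖a'‖:ℝ) ^ 2 = B at K2 K3 hD' hD'ne ⊢
    -- solve the scalar algebra
    have h1 : t1 = 1 := by
      have h0 : (1 - α) * (1 - α) * (1 - t1) = 0 := by rw [K1]; ring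
      rcases mul_eq_zero.mp h0 with h | h
      · exact absurd h (mul_ne_zero hdx hdx)
      · linarith
    have h2' : (1 - B) * (1 - t2) = 1 - ‖a‖ ^ 2 :=
      mul_left_cancel₀ hD'ne (by linear_combination K2)
    have h2 : (1 - ‖a‖ ^ 2) / (1 - B) = 1 - t2 := by
      rw [div_eq_iff hD'ne]; linear_combination -h2'
    have h0 : (1 - α) * ((1 - B) * (1 - t3) - (1 - ‖a‖ ^ 2)) = 0 := by
      linear_combination K3
    have h3' : (1 - B) * (1 - t3) = 1 - ‖a‖ ^ 2 := by
      rcases mul_eq_zero.mp h0 with h | h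
      · exact absurd h hdx
      · linarith
    have h3 : (1 - ‖a‖ ^ 2) / (1 - B) = 1 - t3 := by
      rw [div_eq_iff hD'ne]; linear_combination -h3'
    linarith [h1, h2, h3]
  refine ⟨main, ?_⟩
  rintro _ ⟨x, ⟨hxE, hxS⟩, rfl⟩
  have hx1 : ‖x‖ = 1 := by simpa using mem_sphere_iff_norm.mp hxS
  have h := main x hxE hx1
  have hnn : (0:ℝ) ≤ (1 - ‖a‖ ^ 2) / (1 - ‖a'‖ ^ 2) := by
    apply div_nonneg <;> nlinarith [norm_nonneg a']
  rw [mem_sphere_iff_norm]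
  rw [← Real.sqrt_sq (norm_nonneg (phiAut a x - phiAut a a')), h]
end
end

section
/- Let b ∈ ℝⁿ with ‖b‖ > 1 and set b* = b/‖b‖² (so ‖b*‖ < 1). For any two distinct points x, y in the open unit ball B^n, the vector φ_{b*}(x) - φ_{b*}(y) is a scalar multiple of b if and only if the points x, y and b are collinear, i.e. y - x is a scalar multiple of b - x. (Equivalently: an affine plane E meeting B^n contains b if and only if the affine plane carrying φ_{b*}(E ∩ B^n) is parallel to the vector b.) -/
open Metric

noncomputable section

theorem phi_bstar_parallel_iff_collinear
    {n : ℕ} (hn : 2 ≤ n) (b : EuclideanSpace ℝ (Fin n)) (hb : 1 < ‖b‖)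
    (x y : EuclideanSpace ℝ (Fin n))
    (hx : x ∈ ball (0 : EuclideanSpace ℝ (Fin n)) 1)
    (hy : y ∈ ball (0 : EuclideanSpace ℝ (Fin n)) 1) (hxy : x ≠ y) :
    (∃ t : ℝ, phiAut ((‖b‖ ^ 2)⁻¹ • b) x - phiAut ((‖b‖ ^ 2)⁻¹ • b) y = t • b) ↔
      (∃ s : ℝ, y - x = s • (b - x)) := by
  have hxn : ‖x‖ < 1 := by simpa using hx
  have hyn : ‖y‖ < 1 := by simpa using hy
  obtain ⟨r, hrdef⟩ : ∃ r : ℝ, r = ‖b‖ ^ 2 := ⟨_, rfl⟩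
  rw [← hrdef]
  have hr1 : 1 < r := by rw [hrdef]; nlinarith [hb, norm_nonneg b]
  have hr0 : (0:ℝ) < r := by linarith
  obtain ⟨s0, hs0def⟩ : ∃ s0 : ℝ, s0 = Real.sqrt (1 - r⁻¹) := ⟨_, rfl⟩
  have hs0pos : 0 < s0 := by
    rw [hs0def]
    apply Real.sqrt_pos.mpr
    have : r⁻¹ < 1 := by rw [inv_lt_one_iff₀]; right; exact hr1
    linarith
  have hlt : ∀ z : EuclideanSpace ℝ (Fin n), ‖z‖ < 1 → (inner ℝ b z : ℝ) < r := by
    intro z hz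
    calc (inner ℝ b z : ℝ) ≤ ‖b‖ * ‖z‖ := real_inner_le_norm b z
      _ < r := by rw [hrdef]; nlinarith [norm_nonneg b, hb]
  have key : ∀ z : EuclideanSpace ℝ (Fin n), ‖z‖ < 1 →
      (r - (inner ℝ b z : ℝ)) • phiAut (r⁻¹ • b) z
        = (1 - (1 - s0) * (inner ℝ b z : ℝ)) • b - (r * s0) • z := by
    intro z hz
    have hczlt := hlt z hz
    obtain ⟨cz, hcz⟩ : ∃ cz : ℝ, cz = (inner ℝ b z : ℝ) := ⟨_, rfl⟩
    rw [← hcz] at hczlt ⊢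
    have h1 : r - cz ≠ 0 := ne_of_gt (by linarith)
    have hinner1 : (inner ℝ z (r⁻¹ • b) : ℝ) = r⁻¹ * cz := by
      rw [real_inner_smul_right, real_inner_comm, ← hcz]
    have hinner2 : (inner ℝ (r⁻¹ • b) z : ℝ) = r⁻¹ * cz := by
      rw [real_inner_smul_left, ← hcz]
    have hnorm : ‖(r⁻¹ • b : EuclideanSpace ℝ (Fin n))‖ ^ 2 = r⁻¹ := by
      rw [norm_smul, mul_pow, ← hrdef, Real.norm_eq_abs, sq_abs]
      field_simp
    rw [phiAut, hinner1, hinner2, hnorm, ← hs0def, smul_smul]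
    have hcoef : (r - cz) * (1 - r⁻¹ * cz)⁻¹ = r := by
      rw [show (1 - r⁻¹ * cz) = (r - cz) / r by field_simp]
      field_simp
    rw [hcoef]
    match_scalars
    · field_simp
      ring
    · field_simp
  obtain ⟨c, hc⟩ : ∃ c : ℝ, c = (inner ℝ b x : ℝ) := ⟨_, rfl⟩
  obtain ⟨d, hd⟩ : ∃ d : ℝ, d = (inner ℝ b y : ℝ) := ⟨_, rfl⟩
  have hcr : c < r := by rw [hc]; exact hlt x hxn
  have hdr : d < r := by rw [hd]; exact hlt y hyn
  have hrc : r - c ≠ 0 := ne_of_gt (by linarith)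
  have hrd : r - d ≠ 0 := ne_of_gt (by linarith)
  have hrs : r * s0 ≠ 0 := by positivity
  have keyx := key x hxn
  have keyy := key y hyn
  rw [← hc] at keyx
  rw [← hd] at keyy
  constructor
  · rintro ⟨t, ht⟩
    have h2 : (r * s0) • ((r - d) • x - (r - c) • y)
        = ((r - d) * (1 - (1 - s0) * c) - (r - c) * (1 - (1 - s0) * d)
            - (r - c) * (r - d) * t) • b := by
      linear_combination (norm := module)
        (r - d) • keyx - (r - c) • keyy - ((r - c) * (r - d)) • ht
    obtain ⟨u, hu⟩ : ∃ u : ℝ, u = (r * s0)⁻¹ * ((r - d) * (1 - (1 - s0) * c)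
        - (r - c) * (1 - (1 - s0) * d) - (r - c) * (r - d) * t) := ⟨_, rfl⟩
    have h3 : (r - d) • x - (r - c) • y = u • b := by
      rw [hu, mul_smul, ← h2, inv_smul_smul₀ hrs]
    have h4 : (r - d) * c - (r - c) * d = u * r := by
      have h5 : (inner ℝ b ((r - d) • x - (r - c) • y) : ℝ) = (inner ℝ b (u • b) : ℝ) := by
        rw [h3]
      rw [inner_sub_right, real_inner_smul_right, real_inner_smul_right,
        real_inner_smul_right, real_inner_self_eq_norm_sq, ← hrdef, ← hc, ← hd] at h5
      exact h5
    have hucd : u = c - d := by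
      have h6 : u * r = (c - d) * r := by linear_combination -h4
      exact mul_right_cancel₀ (ne_of_gt hr0) h6
    rw [hucd] at h3
    refine ⟨(d - c) / (r - c), ?_⟩
    have h7 : (r - c) • (y - x) = (d - c) • (b - x) := by
      linear_combination (norm := module) (-1 : ℝ) • h3
    have h8 : y - x = (r - c)⁻¹ • ((d - c) • (b - x)) := by
      rw [← h7, inv_smul_smul₀ hrc]
    rw [h8, smul_smul, div_eq_inv_mul]
  · rintro ⟨s', hs'⟩
    have hyeq : y = s' • (b - x) + x := sub_eq_iff_eq_add.mp hs'
    have hd' : d = c + s' * (r - c) := by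
      rw [hd, hyeq, inner_add_right, real_inner_smul_right, inner_sub_right,
        real_inner_self_eq_norm_sq, ← hrdef, ← hc]
      ring
    have hdx : d • x = (c + s' * (r - c)) • x := by rw [hd']
    have hu2 : (r - d) • x - (r - c) • y = (-((r - c) * s')) • b := by
      linear_combination (norm := module) (-(r - c) : ℝ) • hs' - hdx
    have h5 : ((r - c) * (r - d)) • (phiAut (r⁻¹ • b) x - phiAut (r⁻¹ • b) y)
        = ((r - d) * (1 - (1 - s0) * c) - (r - c) * (1 - (1 - s0) * d)
            + (r * s0) * ((r - c) * s')) • b := by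
      linear_combination (norm := module)
        (r - d) • keyx - (r - c) • keyy - (r * s0) • hu2
    have hrcd : (r - c) * (r - d) ≠ 0 := mul_ne_zero hrc hrd
    refine ⟨((r - c) * (r - d))⁻¹ * ((r - d) * (1 - (1 - s0) * c)
        - (r - c) * (1 - (1 - s0) * d) + (r * s0) * ((r - c) * s')), ?_⟩
    rw [mul_smul, ← h5, inv_smul_smul₀ hrcd]
end
end

section
/- Fix an integer k ≥ 1. Let z_a, z_b ∈ ℂ with |z_a| ≠ 1, |z_b| ≠ 1 and z_a ≠ z_b, and suppose the Möbius transformation T is hyperbolic, parabolic, or loxodromic, i.e. either D > 0 and (⟨z_a,z_b⟩ - 1)² ≥ D, or D < 0 and ⟨z_a,z_b⟩ ≠ 1. Then every T-automorphic continuous function f : S¹ → ℝ is constant when k = 1, and is identically zero when k > 1. -/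
open Metric

noncomputable section

/-- The Möbius transformation `T` associated with `z_a, z_b`. -/
def mob (za zb z : ℂ) : ℂ :=
  ((starRingEnd ℂ za * zb - 1) * z + (za - zb)) /
    ((starRingEnd ℂ za - starRingEnd ℂ zb) * z + (za * starRingEnd ℂ zb - 1))

/-- `|T′(z)|`, the modulus of the complex derivative of `mob za zb`. -/
def mobDeriv (za zb z : ℂ) : ℝ :=
  |(1 - ‖za‖ ^ 2) * (1 - ‖zb‖ ^ 2)| /
    ‖(starRingEnd ℂ za - starRingEnd ℂ zb) * z
      + (za * starRingEnd ℂ zb - 1)‖ ^ 2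

/-- A continuous function `f` on the unit circle is `T`-automorphic (with weight
exponent `k-1`) if `f(z) = |T′(z)|^{k-1}·f(T z)` on the circle. -/
def TAutomorphic (k : ℕ) (za zb : ℂ) (f : ℂ → ℝ) : Prop :=
  ∀ z ∈ sphere (0 : ℂ) 1, f z = (mobDeriv za zb z) ^ (k - 1) * f (mob za zb z)

open Complex Filter Finset Topology

namespace AutoAux

def den (α β z : ℂ) : ℂ := (starRingEnd ℂ β) * z + (starRingEnd ℂ α)
def phi (α β z : ℂ) : ℂ := (α * z + β) / den α β z
def wgt (α β z : ℂ) : ℝ := (normSq α - normSq β) / normSq (den α β z)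
def sval (α β : ℂ) : ℝ := Real.sqrt (normSq β - α.im^2)
def pfix (α β : ℂ) : ℂ := (((sval α β : ℝ):ℂ) + α.im * Complex.I)/(starRingEnd ℂ β)
def qfix (α β : ℂ) : ℂ := (((-sval α β : ℝ):ℂ) + α.im * Complex.I)/(starRingEnd ℂ β)

lemma abs_eq_one {z : ℂ} (hz : normSq z = 1) : ‖z‖ = 1 := by
  rw [Complex.norm_def, hz, Real.sqrt_one]

lemma mem_sphere_iff_normSq {z : ℂ} : z ∈ sphere (0:ℂ) 1 ↔ normSq z = 1 := by
  rw [mem_sphere_zero_iff_norm, Complex.norm_def]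
  constructor
  · intro h; nlinarith [Real.sq_sqrt (normSq_nonneg z), Real.sqrt_nonneg (normSq z)]
  · intro h; rw [h, Real.sqrt_one]

lemma key_normSq (α β z : ℂ) :
    normSq (α * z + β) - normSq (den α β z)
      = (normSq α - normSq β) * (normSq z - 1) := by
  simp only [den, normSq_apply, Complex.add_re, Complex.add_im, Complex.mul_re,
    Complex.mul_im, Complex.conj_re, Complex.conj_im]
  ring

lemma den_ne_zero {α β : ℂ} (hd : normSq α - normSq β ≠ 0) {z : ℂ}
    (hz : normSq z = 1) : den α β z ≠ 0 := by
  intro h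
  have hk := key_normSq α β z
  rw [h, hz] at hk
  simp at hk
  have h2 : β = -(α * z) := by linear_combination hk
  have : normSq β = normSq α := by rw [h2]; simp [normSq_mul, hz]
  exact hd (by linarith)

lemma phi_mem {α β : ℂ} (hd : normSq α - normSq β ≠ 0) {z : ℂ}
    (hz : normSq z = 1) : normSq (phi α β z) = 1 := by
  have hden := den_ne_zero hd hz
  have hk := key_normSq α β z
  rw [hz] at hk; simp at hk
  have hk' : normSq (α * z + β) = normSq (den α β z) := by linarith
  rw [phi, normSq_div, hk', div_self (normSq_eq_zero.ne.mpr hden)]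

lemma idGen (α β : ℂ) (hβ : β ≠ 0) (s' : ℝ) (hs' : s'^2 = normSq β - α.im^2)
    (z : ℂ) (hden : den α β z ≠ 0) :
    phi α β z - ((s':ℂ) + α.im * Complex.I)/(starRingEnd ℂ β)
      = ((α.re - s' : ℝ):ℂ) * (z - ((s':ℂ) + α.im * Complex.I)/(starRingEnd ℂ β))
         / den α β z := by
  have hc : β * (starRingEnd ℂ β) = (normSq β : ℂ) := Complex.mul_conj β
  have hcne : (starRingEnd ℂ β) ≠ 0 := by simpa using hβ
  have hs'c : (s':ℂ)^2 = (normSq β : ℂ) - (α.im:ℂ)^2 := by exact_mod_cast hs'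
  have hconjα : (starRingEnd ℂ) α = (α.re:ℂ) - α.im * Complex.I := by
    rw [Complex.ext_iff]; simp
  have hαeq : α = (α.re:ℂ) + α.im * Complex.I := (Complex.re_add_im α).symm
  have hnum : α * z + β - den α β z * (((s':ℂ) + α.im * Complex.I)/(starRingEnd ℂ β))
      = ((α.re - s' : ℝ):ℂ) * (z - ((s':ℂ) + α.im * Complex.I)/(starRingEnd ℂ β)) := by
    rw [den, hconjα]
    field_simp
    push_cast
    ring_nf
    linear_combination (norm := ring_nf) hc - hs'c + (z * (starRingEnd ℂ β)) * hαeq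
      + ((α.im:ℂ)^2) * Complex.I_sq
  rw [phi, div_sub' hden, hnum]

section
variable {α β : ℂ}

lemma hs2 (hm : α.im^2 ≤ normSq β) : (sval α β)^2 = normSq β - α.im^2 :=
  Real.sq_sqrt (by linarith)

lemma normSq_pfix (hβ : β ≠ 0) (hm : α.im^2 ≤ normSq β) : normSq (pfix α β) = 1 := by
  have h1 : normSq ((((sval α β : ℝ)):ℂ) + α.im * Complex.I) = normSq β := by
    rw [normSq_apply]; simp; nlinarith [hs2 hm]
  rw [pfix, normSq_div, h1, normSq_conj]
  field_simp [normSq_eq_zero.ne.mpr hβ]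

lemma normSq_qfix (hβ : β ≠ 0) (hm : α.im^2 ≤ normSq β) : normSq (qfix α β) = 1 := by
  have h1 : normSq ((((-sval α β : ℝ)):ℂ) + α.im * Complex.I) = normSq β := by
    rw [normSq_apply]; simp; nlinarith [hs2 hm]
  rw [qfix, normSq_div, h1, normSq_conj]
  field_simp [normSq_eq_zero.ne.mpr hβ]

lemma hMuL (hd : 0 < normSq α - normSq β) (hr : 0 < α.re) :
    0 < α.re - sval α β ∧ 0 < α.re + sval α β := by
  have h0 : 0 ≤ sval α β := Real.sqrt_nonneg _
  have hnα : normSq α = α.re^2 + α.im^2 := by rw [normSq_apply]; ring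
  by_cases hm : α.im^2 ≤ normSq β
  · have := hs2 (α := α) (β := β) hm
    constructor <;> nlinarith
  · have : sval α β = 0 := by
      rw [sval, Real.sqrt_eq_zero']; nlinarith
    rw [this]; constructor <;> linarith

lemma hyper (hβ : β ≠ 0) (hd : 0 < normSq α - normSq β) (hr : 0 < α.re)
    (hm : α.im^2 ≤ normSq β) (hs : 0 < sval α β) (z : ℂ)
    (hz : normSq z = 1) (hzq : z ≠ qfix α β) :
    Tendsto (fun n => (phi α β)^[n] z) atTop (𝓝 (pfix α β)) ∧
    Tendsto (fun n => ∏ j ∈ Finset.range n, wgt α β ((phi α β)^[j] z)) atTop (𝓝 0) := by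
  obtain ⟨hMu, hL⟩ := hMuL hd hr
  have hcne : (starRingEnd ℂ β) ≠ 0 := by simpa using hβ
  have hd0 : normSq α - normSq β ≠ 0 := ne_of_gt hd
  set s := sval α β with hsdef
  set Mu := α.re - s with hMudef
  set L := α.re + s with hLdef
  set p := pfix α β with hpdef
  set q := qfix α β with hqdef
  have hpq : p ≠ q := by
    rw [hpdef, hqdef, pfix, qfix]
    intro h
    rw [div_eq_div_iff hcne hcne] at h
    have : (s:ℂ) = ((-s : ℝ):ℂ) := by
      have := mul_right_cancel₀ hcne h
      linear_combination this
    have : s = -s := by exact_mod_cast this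
    linarith
  have hA : ∀ ζ, den α β ζ ≠ 0 → phi α β ζ - p = ((Mu : ℝ):ℂ) * (ζ - p)/den α β ζ :=
    fun ζ h => idGen α β hβ s (hs2 hm) ζ h
  have hB : ∀ ζ, den α β ζ ≠ 0 → phi α β ζ - q = ((L : ℝ):ℂ) * (ζ - q)/den α β ζ := by
    intro ζ h
    have := idGen α β hβ (-s) (by rw [neg_pow]; simpa using hs2 hm) ζ h
    rw [sub_neg_eq_add] at this
    exact this
  set g : ℕ → ℂ := fun n => (phi α β)^[n] z with hgdef
  have hgsucc : ∀ n, g (n+1) = phi α β (g n) := fun n => Function.iterate_succ_apply' _ _ _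
  have H : ∀ n, normSq (g n) = 1 ∧ g n ≠ q ∧
      ((g n - p) * (z - q) * ((L : ℝ):ℂ)^n = ((Mu : ℝ):ℂ)^n * ((z - p) * (g n - q))) ∧
      ((∏ j ∈ Finset.range n, wgt α β (g j)) * (normSq (z - q) * L^n)
        = Mu^n * normSq (g n - q)) := by
    intro n
    induction n with
    | zero =>
      have hg0 : g 0 = z := rfl
      refine ⟨by rw [hg0]; exact hz, by rw [hg0]; exact hzq, by rw [hg0]; ring, by rw [hg0]; simp⟩
    | succ n ih =>
      obtain ⟨h1, h2, h3, h4⟩ := ih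
      have hden : den α β (g n) ≠ 0 := den_ne_zero hd0 h1
      have hA' : (phi α β (g n) - p) * den α β (g n) = ((Mu : ℝ):ℂ) * (g n - p) := by
        rw [hA _ hden, div_mul_cancel₀ _ hden]
      have hB' : (phi α β (g n) - q) * den α β (g n) = ((L : ℝ):ℂ) * (g n - q) := by
        rw [hB _ hden, div_mul_cancel₀ _ hden]
      refine ⟨by rw [hgsucc]; exact phi_mem hd0 h1, ?_, ?_, ?_⟩
      · rw [hgsucc]
        intro hcon
        rw [hcon] at hB'
        simp at hB'
        rcases hB' with h | h
        · exact absurd (by exact_mod_cast h : L = 0) (ne_of_gt hL)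
        · exact h2 (by linear_combination h)
      · rw [hgsucc]
        refine mul_left_cancel₀ hden ?_
        push_cast
        linear_combination ((z-q) * ((L:ℂ))^n * (L:ℂ)) * hA'
          - (((Mu:ℂ))^n * (Mu:ℂ) * (z-p)) * hB' + ((Mu:ℂ) * (L:ℂ)) * h3
      · rw [hgsucc, Finset.prod_range_succ]
        have hnsqB : normSq (phi α β (g n) - q) * normSq (den α β (g n))
            = L^2 * normSq (g n - q) := by
          have := congrArg normSq hB'
          rw [normSq_mul, normSq_mul] at this
          rw [this, normSq_ofReal]; ring
        have hwgt : wgt α β (g n) = (normSq α - normSq β) / normSq (den α β (g n)) := rfl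
        have hdn : normSq (den α β (g n)) ≠ 0 := normSq_eq_zero.ne.mpr hden
        have hLM : L * Mu = normSq α - normSq β := by
          have hnα : normSq α = α.re^2 + α.im^2 := by rw [normSq_apply]; ring
          have := hs2 (α := α) (β := β) hm
          nlinarith
        have hwgt' : wgt α β (g n) * normSq (den α β (g n)) = L * Mu := by
          rw [hwgt]; field_simp; linarith [hLM]
        refine mul_right_cancel₀ hdn ?_
        linear_combination ((∏ j ∈ Finset.range n, wgt α β (g j)) * normSq (z - q) * L^(n+1)) * hwgt'
          + (L^2*Mu) * h4 - (Mu^(n+1)) * hnsqB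
  -- extract tendsto
  have hq1 : normSq q = 1 := normSq_qfix hβ hm
  have hκ1 : (0:ℝ) ≤ Mu/L := le_of_lt (div_pos hMu hL)
  have hκ2 : Mu/L < 1 := (div_lt_one hL).mpr (by dsimp [Mu, L]; linarith)
  have hzq' : 0 < ‖z - q‖ := by
    rw [norm_pos_iff]; exact sub_ne_zero.mpr hzq
  have habs : ∀ n, ‖g n - p‖ * ‖z - q‖ * L^n
      = Mu^n * (‖z - p‖ * ‖g n - q‖) := by
    intro n
    have h3 := (H n).2.2.1
    have := congrArg (‖·‖) h3
    simpa [norm_mul, norm_pow, Complex.norm_real, Real.norm_eq_abs, abs_of_pos hL, abs_of_pos hMu] using this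
  have hgq2 : ∀ n, ‖g n - q‖ ≤ 2 := by
    intro n
    have h := norm_sub_le (g n) q
    rw [abs_eq_one (H n).1, abs_eq_one hq1] at h
    linarith
  set C := 2 * ‖z - p‖ / ‖z - q‖ with hC
  have hbound : ∀ n, ‖g n - p‖ ≤ C * (Mu/L)^n := by
    intro n
    have hpos : 0 < ‖z - q‖ * L^n := mul_pos hzq' (pow_pos hL n)
    have hCeq : C * (Mu/L)^n = (2 * ‖z - p‖ * Mu^n)/(‖z - q‖ * L^n) := by
      rw [hC, div_pow]; field_simp
    rw [hCeq, le_div_iff₀ hpos, ← mul_assoc, habs n]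
    nlinarith [mul_nonneg (mul_nonneg (pow_nonneg (le_of_lt hMu) n)
      (norm_nonneg (z - p))) (sub_nonneg.mpr (hgq2 n))]
  have habs0 : Tendsto (fun n => ‖g n - p‖) atTop (𝓝 0) := by
    refine squeeze_zero (fun n => norm_nonneg _) hbound ?_
    simpa using (tendsto_pow_atTop_nhds_zero_of_lt_one hκ1 hκ2).const_mul C
  have htp : Tendsto g atTop (𝓝 p) := by
    rw [tendsto_iff_norm_sub_tendsto_zero]
    simpa using habs0
  refine ⟨htp, ?_⟩
  have hnsqzq : normSq (z - q) ≠ 0 := normSq_eq_zero.ne.mpr (sub_ne_zero.mpr hzq)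
  have hQeq : ∀ n, (∏ j ∈ Finset.range n, wgt α β (g j))
      = (Mu/L)^n * (normSq (g n - q) / normSq (z - q)) := by
    intro n
    have h4 := (H n).2.2.2
    have hLn : (L:ℝ)^n ≠ 0 := (pow_pos hL n).ne'
    have hrw : (Mu/L)^n * (normSq (g n - q) / normSq (z - q))
        = (Mu^n * normSq (g n - q))/(normSq (z - q) * L^n) := by
      rw [div_pow, div_mul_div_comm, mul_comm (L^n) (normSq (z - q))]
    rw [hrw, eq_div_iff (mul_ne_zero hnsqzq hLn)]
    linear_combination h4
  have t1 : Tendsto (fun n : ℕ => (Mu/L)^n) atTop (𝓝 0) :=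
    tendsto_pow_atTop_nhds_zero_of_lt_one hκ1 hκ2
  have t2 : Tendsto (fun n => normSq (g n - q) / normSq (z - q)) atTop
      (𝓝 (normSq (p - q) / normSq (z - q))) := by
    exact ((Complex.continuous_normSq.tendsto (p - q)).comp (htp.sub_const q)).div_const _
  rw [show (fun n => ∏ j ∈ Finset.range n, wgt α β (g j))
      = fun n => (Mu/L)^n * (normSq (g n - q) / normSq (z - q)) from funext hQeq]
  simpa using t1.mul t2

lemma parab (hβ : β ≠ 0) (hd : 0 < normSq α - normSq β) (hr : 0 < α.re)
    (hm : α.im^2 ≤ normSq β) (hs : sval α β = 0) (z : ℂ)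
    (hz : normSq z = 1) (hzq : z ≠ pfix α β) :
    Tendsto (fun n => (phi α β)^[n] z) atTop (𝓝 (pfix α β)) ∧
    Tendsto (fun n => ∏ j ∈ Finset.range n, wgt α β ((phi α β)^[j] z)) atTop (𝓝 0) := by
  have hcne : (starRingEnd ℂ β) ≠ 0 := by simpa using hβ
  have hd0 : normSq α - normSq β ≠ 0 := ne_of_gt hd
  have hrne : ((α.re:ℝ):ℂ) ≠ 0 := by
    simpa using (Complex.ofReal_ne_zero.mpr (ne_of_gt hr))
  have hnm : normSq β = α.im^2 := by
    have h := hs2 (α := α) (β := β) hm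
    rw [hs] at h; simp at h; linarith
  have hd2 : normSq α - normSq β = α.re^2 := by
    have hnα : normSq α = α.re^2 + α.im^2 := by rw [normSq_apply]; ring
    rw [hnα, hnm]; ring
  set p := pfix α β with hpdef
  have hp1 : normSq p = 1 := normSq_pfix hβ hm
  have hconjα : (starRingEnd ℂ) α = (α.re:ℂ) - α.im * Complex.I := by
    rw [Complex.ext_iff]; simp
  have hpeq : p = (((0:ℝ):ℂ) + α.im * Complex.I)/(starRingEnd ℂ β) := by
    rw [hpdef, pfix, hs]
  have hA : ∀ ζ, den α β ζ ≠ 0 → phi α β ζ - p = ((α.re:ℝ):ℂ) * (ζ - p)/den α β ζ := by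
    intro ζ h
    have h0 : (0:ℝ)^2 = normSq β - α.im^2 := by rw [hnm]; ring
    have := idGen α β hβ 0 h0 ζ h
    rw [hpeq]
    simpa using this
  have hdenp' : (starRingEnd ℂ β) * p + (starRingEnd ℂ α) = ((α.re:ℝ):ℂ) := by
    rw [hpeq]
    have hcan : (starRingEnd ℂ β) * ((((0:ℝ):ℂ) + α.im * Complex.I)/(starRingEnd ℂ β))
        = (((0:ℝ):ℂ) + α.im * Complex.I) := by
      rw [mul_div_assoc', mul_div_cancel_left₀ _ hcne]
    rw [hcan, hconjα]
    push_cast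
    ring
  have hden2 : ∀ ζ, den α β ζ = ((α.re:ℝ):ℂ) + (starRingEnd ℂ β) * (ζ - p) := by
    intro ζ
    rw [den]
    linear_combination hdenp'
  set g : ℕ → ℂ := fun n => (phi α β)^[n] z with hgdef
  have hgsucc : ∀ n, g (n+1) = phi α β (g n) := fun n => Function.iterate_succ_apply' _ _ _
  have H : ∀ n, normSq (g n) = 1 ∧ g n ≠ p ∧
      (((α.re:ℝ):ℂ) * (z - p) = (g n - p) * (((α.re:ℝ):ℂ) + (n:ℂ) * ((starRingEnd ℂ β) * (z - p)))) ∧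
      ((∏ j ∈ Finset.range n, wgt α β (g j)) * normSq (z - p) = normSq (g n - p)) := by
    intro n
    induction n with
    | zero =>
      have hg0 : g 0 = z := rfl
      refine ⟨by rw [hg0]; exact hz, by rw [hg0]; exact hzq, by rw [hg0]; push_cast; ring,
        by rw [hg0]; simp⟩
    | succ n ih =>
      obtain ⟨h1, h2, h3, h4⟩ := ih
      have hden : den α β (g n) ≠ 0 := den_ne_zero hd0 h1
      have hA' : (phi α β (g n) - p) * den α β (g n) = ((α.re:ℝ):ℂ) * (g n - p) := by
        rw [hA _ hden, div_mul_cancel₀ _ hden]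
      have hd2n := hden2 (g n)
      refine ⟨by rw [hgsucc]; exact phi_mem hd0 h1, ?_, ?_, ?_⟩
      · rw [hgsucc]
        intro hcon
        rw [hcon] at hA'
        simp at hA'
        rcases hA' with h | h
        · exact absurd h (by simpa using (ne_of_gt hr))
        · exact h2 (by linear_combination h)
      · rw [hgsucc]
        push_cast
        refine mul_left_cancel₀ hden ?_
        linear_combination (-(((α.re:ℝ):ℂ) + ((n:ℂ)+1) * ((starRingEnd ℂ β) * (z - p)))) * hA'
          + (((α.re:ℝ):ℂ) * (z - p)) * hd2n + ((α.re:ℝ):ℂ) * h3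
      · rw [hgsucc, Finset.prod_range_succ]
        have hdn : normSq (den α β (g n)) ≠ 0 := normSq_eq_zero.ne.mpr hden
        have hnsqA : normSq (phi α β (g n) - p) * normSq (den α β (g n))
            = α.re^2 * normSq (g n - p) := by
          have := congrArg normSq hA'
          rw [normSq_mul, normSq_mul] at this
          rw [this, normSq_ofReal]; ring
        have hwgt' : wgt α β (g n) * normSq (den α β (g n)) = α.re^2 := by
          rw [wgt]; field_simp; linarith [hd2]
        refine mul_right_cancel₀ hdn ?_
        linear_combination ((∏ j ∈ Finset.range n, wgt α β (g j)) * normSq (z - p)) * hwgt'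
          + (α.re^2) * h4 - hnsqA
  -- tendsto extraction
  set w : ℂ := (starRingEnd ℂ β) * (z - p) with hwdef
  have hwne : w ≠ 0 := mul_ne_zero hcne (sub_ne_zero.mpr hzq)
  have hwpos : 0 < ‖w‖ := by rw [norm_pos_iff]; exact hwne
  have har : ‖(α.re:ℂ)‖ = α.re := by
    rw [Complex.norm_real, Real.norm_eq_abs, abs_of_pos hr]
  have habs3 : ∀ n, α.re * ‖z - p‖
      = ‖g n - p‖ * ‖((α.re:ℝ):ℂ) + (n:ℂ) * w‖ := by
    intro n
    have := congrArg (‖·‖) (H n).2.2.1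
    rw [norm_mul, norm_mul, har] at this
    exact this
  have hlow : ∀ n : ℕ, (n:ℝ) * ‖w‖ - α.re
      ≤ ‖((α.re:ℝ):ℂ) + (n:ℂ) * w‖ := by
    intro n
    have h := norm_sub_le (((α.re:ℝ):ℂ) + (n:ℂ) * w) ((α.re:ℝ):ℂ)
    rw [add_sub_cancel_left] at h
    rw [norm_mul, Complex.norm_natCast, har] at h
    linarith
  have hg1 : Tendsto (fun n : ℕ => (n:ℝ) * ‖w‖ - α.re) atTop atTop := by
    have h1 : Tendsto (fun n : ℕ => (n:ℝ) * ‖w‖) atTop atTop :=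
      Tendsto.atTop_mul_const hwpos tendsto_natCast_atTop_atTop
    simpa [sub_eq_add_neg] using tendsto_atTop_add_const_right atTop (-α.re) h1
  have hev : ∀ᶠ n : ℕ in atTop, ‖g n - p‖
      ≤ (α.re * ‖z - p‖) / ((n:ℝ) * ‖w‖ - α.re) := by
    filter_upwards [hg1.eventually_gt_atTop 0] with n hn
    rw [le_div_iff₀ hn]
    calc ‖g n - p‖ * ((n:ℝ) * ‖w‖ - α.re)
        ≤ ‖g n - p‖ * ‖((α.re:ℝ):ℂ) + (n:ℂ) * w‖ :=
          mul_le_mul_of_nonneg_left (hlow n) (norm_nonneg _)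
      _ = α.re * ‖z - p‖ := (habs3 n).symm
  have habs0 : Tendsto (fun n => ‖g n - p‖) atTop (𝓝 0) := by
    refine squeeze_zero' (Filter.Eventually.of_forall (fun n => norm_nonneg _)) hev ?_
    exact Tendsto.div_atTop tendsto_const_nhds hg1
  have htp : Tendsto g atTop (𝓝 p) := by
    rw [tendsto_iff_norm_sub_tendsto_zero]
    simpa using habs0
  refine ⟨htp, ?_⟩
  have hnsqzp : normSq (z - p) ≠ 0 := normSq_eq_zero.ne.mpr (sub_ne_zero.mpr hzq)
  have hQeq : ∀ n, (∏ j ∈ Finset.range n, wgt α β (g j))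
      = normSq (g n - p) / normSq (z - p) := by
    intro n
    rw [eq_div_iff hnsqzp]
    exact (H n).2.2.2
  rw [show (fun n => ∏ j ∈ Finset.range n, wgt α β (g j))
      = fun n => normSq (g n - p) / normSq (z - p) from funext hQeq]
  have h0 : Tendsto (fun n => g n - p) atTop (𝓝 0) := by
    simpa using htp.sub_const p
  have h1 : Tendsto (fun n => normSq (g n - p)) atTop (𝓝 0) := by
    have := (Complex.continuous_normSq.tendsto 0).comp h0
    simpa [Function.comp_def] using this
  simpa using h1.div_const (normSq (z - p))

lemma wrapup (α β : ℂ) (hd0 : normSq α - normSq β ≠ 0) (p q : ℂ)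
    (hp : normSq p = 1) (hq : normSq q = 1)
    (hmain : ∀ z, normSq z = 1 → z ≠ q →
       Tendsto (fun n => (phi α β)^[n] z) atTop (𝓝 p) ∧
       Tendsto (fun n => ∏ j ∈ Finset.range n, wgt α β ((phi α β)^[j] z)) atTop (𝓝 0))
    (k : ℕ) (hk : 1 ≤ k) (f : ℂ → ℝ) (hf : ContinuousOn f (sphere (0:ℂ) 1))
    (haut : ∀ z ∈ sphere (0:ℂ) 1, f z = (wgt α β z)^(k-1) * f (phi α β z)) :
    (k = 1 → ∃ c : ℝ, ∀ z ∈ sphere (0:ℂ) 1, f z = c) ∧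
    (1 < k → ∀ z ∈ sphere (0:ℂ) 1, f z = 0) := by
  set c0 := if k = 1 then f p else 0 with hc0
  have hpm : p ∈ sphere (0:ℂ) 1 := mem_sphere_iff_normSq.mpr hp
  have hqm : q ∈ sphere (0:ℂ) 1 := mem_sphere_iff_normSq.mpr hq
  have hzmain : ∀ z, normSq z = 1 → z ≠ q → f z = c0 := by
    intro z hz hzq
    obtain ⟨htend, hQ⟩ := hmain z hz hzq
    have hmem : ∀ n, normSq ((phi α β)^[n] z) = 1 := by
      intro n; induction n with
      | zero => simpa using hz
      | succ n ih => rw [Function.iterate_succ_apply']; exact phi_mem hd0 ih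
    have heq : ∀ n, f z = (∏ j ∈ Finset.range n, wgt α β ((phi α β)^[j] z))^(k-1)
        * f ((phi α β)^[n] z) := by
      intro n; induction n with
      | zero => simp
      | succ n ih =>
        rw [ih, Finset.prod_range_succ, Function.iterate_succ_apply', mul_pow,
          haut _ (mem_sphere_iff_normSq.mpr (hmem n))]
        ring
    have hfseq : Tendsto (fun n => f ((phi α β)^[n] z)) atTop (𝓝 (f p)) := by
      have hwithin : Tendsto (fun n => (phi α β)^[n] z) atTop (𝓝[sphere (0:ℂ) 1] p) :=
        tendsto_nhdsWithin_of_tendsto_nhds_of_eventually_within _ htend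
          (Filter.Eventually.of_forall fun n => mem_sphere_iff_normSq.mpr (hmem n))
      exact (hf p hpm).tendsto.comp hwithin
    have hlim : Tendsto (fun n => (∏ j ∈ Finset.range n, wgt α β ((phi α β)^[j] z))^(k-1)
        * f ((phi α β)^[n] z)) atTop (𝓝 c0) := by
      by_cases hk1 : k = 1
      · subst hk1; simpa [hc0] using hfseq
      · have hkk : k - 1 ≠ 0 := by omega
        have h1 : Tendsto (fun n => (∏ j ∈ Finset.range n, wgt α β ((phi α β)^[j] z))^(k-1))
            atTop (𝓝 0) := by
          simpa [zero_pow hkk] using hQ.pow (k-1)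
        have := h1.mul hfseq
        simpa [hc0, hk1] using this
    have hconstseq : Tendsto (fun _ : ℕ => f z) atTop (𝓝 c0) := by
      rw [show (fun _ : ℕ => f z)
          = fun n => (∏ j ∈ Finset.range n, wgt α β ((phi α β)^[j] z))^(k-1)
            * f ((phi α β)^[n] z) from funext heq]
      exact hlim
    exact tendsto_nhds_unique tendsto_const_nhds hconstseq
  have hq0 : f q = c0 := by
    have hqne : q ≠ 0 := by intro h; rw [h] at hq; simp at hq
    set rad : ℕ → ℝ := fun n => 1/((n:ℝ)+1) with hrad
    set u : ℕ → ℂ := fun n => q * Complex.exp (((rad n : ℝ) : ℂ) * Complex.I) with hu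
    have hexpabs : ∀ x : ℝ, ‖Complex.exp ((x:ℂ) * Complex.I)‖ = 1 := by
      intro x; rw [Complex.norm_exp]; simp
    have humem : ∀ n, normSq (u n) = 1 := by
      intro n
      rw [hu]
      simp only []
      rw [normSq_mul, hq, one_mul, ← Complex.sq_norm, hexpabs]
      norm_num
    have hune : ∀ n, u n ≠ q := by
      intro n h
      have hx1 : 0 < rad n := by rw [hrad]; positivity
      have hx2 : rad n ≤ 1 := by
        rw [hrad]
        simp only []
        rw [div_le_one (by positivity)]
        simp
      have hexp1 : Complex.exp (((rad n : ℝ) : ℂ) * Complex.I) = 1 := by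
        rw [hu] at h
        simp only [] at h
        exact mul_left_cancel₀ hqne (by rw [h, mul_one])
      rw [Complex.exp_eq_one_iff] at hexp1
      obtain ⟨m, hm⟩ := hexp1
      have him := congrArg Complex.im hm
      simp at him
      have hpi := Real.pi_gt_three
      have hcases : (m:ℝ) ≤ 0 ∨ 1 ≤ (m:ℝ) := by
        exact_mod_cast (by omega : m ≤ 0 ∨ 1 ≤ m)
      rcases hcases with hm' | hm' <;> nlinarith
    have hut : Tendsto u atTop (𝓝 q) := by
      have hc : Continuous fun x : ℝ => q * Complex.exp ((x:ℂ) * Complex.I) := by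
        continuity
      have h0 : Tendsto rad atTop (𝓝 0) := by
        rw [hrad]; exact tendsto_one_div_add_atTop_nhds_zero_nat
      have := (hc.tendsto 0).comp h0
      simp only [Function.comp_def] at this
      simpa [hu] using this
    have hfu : Tendsto (fun n => f (u n)) atTop (𝓝 (f q)) := by
      have hwithin : Tendsto u atTop (𝓝[sphere (0:ℂ) 1] q) :=
        tendsto_nhdsWithin_of_tendsto_nhds_of_eventually_within _ hut
          (Filter.Eventually.of_forall fun n => mem_sphere_iff_normSq.mpr (humem n))
      exact (hf q hqm).tendsto.comp hwithin
    have hfu' : Tendsto (fun n => f (u n)) atTop (𝓝 c0) := by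
      rw [show (fun n => f (u n)) = fun _ => c0 from funext fun n =>
        hzmain (u n) (humem n) (hune n)]
      exact tendsto_const_nhds
    exact tendsto_nhds_unique hfu hfu'
  constructor
  · intro hk1
    refine ⟨c0, fun z hz => ?_⟩
    by_cases hzq : z = q
    · rw [hzq]; exact hq0
    · exact hzmain z (mem_sphere_iff_normSq.mp hz) hzq
  · intro hk1 z hz
    have hc00 : c0 = 0 := by rw [hc0, if_neg (by omega : ¬ k = 1)]
    rw [← hc00]
    by_cases hzq : z = q
    · rw [hzq]; exact hq0
    · exact hzmain z (mem_sphere_iff_normSq.mp hz) hzq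

lemma core (α β : ℂ) (hβ : β ≠ 0) (hd : 0 < normSq α - normSq β) (hr : 0 < α.re)
    (hm : α.im^2 ≤ normSq β)
    (k : ℕ) (hk : 1 ≤ k) (f : ℂ → ℝ) (hf : ContinuousOn f (sphere (0:ℂ) 1))
    (haut : ∀ z ∈ sphere (0:ℂ) 1, f z = (wgt α β z)^(k-1) * f (phi α β z)) :
    (k = 1 → ∃ c : ℝ, ∀ z ∈ sphere (0:ℂ) 1, f z = c) ∧
    (1 < k → ∀ z ∈ sphere (0:ℂ) 1, f z = 0) := by
  have hmm : α.im^2 ≤ normSq β := hm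
  rcases lt_or_eq_of_le (Real.sqrt_nonneg (normSq β - α.im^2) : 0 ≤ sval α β) with hs | hs
  · exact wrapup α β (ne_of_gt hd) (pfix α β) (qfix α β) (normSq_pfix hβ hm)
      (normSq_qfix hβ hm) (fun z hz hzq => hyper hβ hd hr hm hs z hz hzq) k hk f hf haut
  · exact wrapup α β (ne_of_gt hd) (pfix α β) (pfix α β) (normSq_pfix hβ hm)
      (normSq_pfix hβ hm) (fun z hz hzq => parab hβ hd hr hm hs.symm z hz hzq) k hk f hf haut

lemma phi_neg (α β z : ℂ) : phi (-α) (-β) z = phi α β z := by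
  have h1 : (-α) * z + (-β) = -(α*z+β) := by ring
  have h2 : den (-α) (-β) z = -(den α β z) := by rw [den, den, map_neg, map_neg]; ring
  rw [phi, phi, h1, h2, neg_div_neg_eq]

lemma wgt_neg (α β z : ℂ) : wgt (-α) (-β) z = wgt α β z := by
  have h2 : den (-α) (-β) z = -(den α β z) := by rw [den, den, map_neg, map_neg]; ring
  rw [wgt, wgt, h2, normSq_neg, normSq_neg, normSq_neg]

lemma coreA (α β : ℂ) (hβ : β ≠ 0) (hd : 0 < normSq α - normSq β) (hrne : α.re ≠ 0)
    (hm : α.im^2 ≤ normSq β)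
    (k : ℕ) (hk : 1 ≤ k) (f : ℂ → ℝ) (hf : ContinuousOn f (sphere (0:ℂ) 1))
    (haut : ∀ z ∈ sphere (0:ℂ) 1, f z = (wgt α β z)^(k-1) * f (phi α β z)) :
    (k = 1 → ∃ c : ℝ, ∀ z ∈ sphere (0:ℂ) 1, f z = c) ∧
    (1 < k → ∀ z ∈ sphere (0:ℂ) 1, f z = 0) := by
  rcases lt_or_gt_of_ne hrne with hneg | hpos
  · refine core (-α) (-β) (neg_ne_zero.mpr hβ) (by simpa [normSq_neg] using hd)
      (by simpa [Complex.neg_re] using neg_pos.mpr hneg)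
      (by simpa [Complex.neg_im, normSq_neg, neg_sq] using hm) k hk f hf ?_
    intro z hz
    rw [wgt_neg, phi_neg]
    exact haut z hz
  · exact core α β hβ hd hpos hm k hk f hf haut

lemma comp_den (α β z : ℂ) (hden : den α β z ≠ 0) :
    den (α*α + β*(starRingEnd ℂ β)) (β*α + β*(starRingEnd ℂ α)) z
      = den α β (phi α β z) * den α β z := by
  have hphiden : phi α β z * den α β z = α * z + β := by
    rw [phi, div_mul_cancel₀ _ hden]
  have h1 : den (α*α + β*(starRingEnd ℂ β)) (β*α + β*(starRingEnd ℂ α)) z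
      = ((starRingEnd ℂ β)*(starRingEnd ℂ α) + (starRingEnd ℂ β)*α) * z
        + ((starRingEnd ℂ α)*(starRingEnd ℂ α) + (starRingEnd ℂ β)*β) := by
    rw [den]; simp only [map_add, map_mul, Complex.conj_conj]
  have h2 : den α β (phi α β z) = (starRingEnd ℂ β) * phi α β z + (starRingEnd ℂ α) := rfl
  have h3 : den α β z = (starRingEnd ℂ β) * z + (starRingEnd ℂ α) := rfl
  have h4 : ((starRingEnd ℂ β) * phi α β z + (starRingEnd ℂ α)) * den α β z
      = (starRingEnd ℂ β) * (phi α β z * den α β z) + (starRingEnd ℂ α) * den α β z := by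
    ring
  rw [h1, h2, h4, hphiden, h3]
  ring

lemma comp_num (α β z : ℂ) (hden : den α β z ≠ 0) :
    (α*α + β*(starRingEnd ℂ β)) * z + (β*α + β*(starRingEnd ℂ α))
      = (α * phi α β z + β) * den α β z := by
  have hphiden : phi α β z * den α β z = α * z + β := by
    rw [phi, div_mul_cancel₀ _ hden]
  have h3 : den α β z = (starRingEnd ℂ β) * z + (starRingEnd ℂ α) := rfl
  have h4 : (α * phi α β z + β) * den α β z
      = α * (phi α β z * den α β z) + β * den α β z := by ring
  rw [h4, hphiden, h3]
  ring

lemma comp_phi (α β z : ℂ) (hden : den α β z ≠ 0) :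
    phi (α*α + β*(starRingEnd ℂ β)) (β*α + β*(starRingEnd ℂ α)) z
      = phi α β (phi α β z) := by
  rw [phi, comp_num α β z hden, comp_den α β z hden]
  rw [mul_div_mul_right _ _ hden]
  rfl

end
end AutoAux

open AutoAux in
theorem automorphic_nonelliptic
    (k : ℕ) (hk : 1 ≤ k) (za zb : ℂ)
    (hza : ‖za‖ ≠ 1) (hzb : ‖zb‖ ≠ 1) (hab : za ≠ zb)
    (htype :
      (0 < (1 - ‖za‖ ^ 2) * (1 - ‖zb‖ ^ 2) ∧
        (1 - ‖za‖ ^ 2) * (1 - ‖zb‖ ^ 2)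
          ≤ ((starRingEnd ℂ za * zb).re - 1) ^ 2) ∨
      ((1 - ‖za‖ ^ 2) * (1 - ‖zb‖ ^ 2) < 0 ∧
        (starRingEnd ℂ za * zb).re ≠ 1))
    (f : ℂ → ℝ) (hf : ContinuousOn f (sphere (0 : ℂ) 1))
    (haut : TAutomorphic k za zb f) :
    (k = 1 → ∃ c : ℝ, ∀ z ∈ sphere (0 : ℂ) 1, f z = c) ∧
    (1 < k → ∀ z ∈ sphere (0 : ℂ) 1, f z = 0) := by
  classical
  set α : ℂ := starRingEnd ℂ za * zb - 1 with hα
  set β : ℂ := za - zb with hβdef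
  have hβ : β ≠ 0 := sub_ne_zero.mpr hab
  have hden_eq : ∀ z, (starRingEnd ℂ za - starRingEnd ℂ zb) * z + (za * starRingEnd ℂ zb - 1)
      = den α β z := by
    intro z
    rw [den, hα, hβdef]
    simp only [map_sub, map_mul, map_one, Complex.conj_conj]
  have hmob : ∀ z, mob za zb z = phi α β z := by
    intro z
    rw [mob, phi, ← hden_eq, hα, hβdef]
  have hD : (1 - ‖za‖ ^ 2) * (1 - ‖zb‖ ^ 2)
      = normSq α - normSq β := by
    rw [hα, hβdef]
    simp only [Complex.sq_norm, normSq_apply, Complex.sub_re, Complex.sub_im, Complex.mul_re,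
      Complex.mul_im, Complex.conj_re, Complex.conj_im, Complex.one_re, Complex.one_im]
    ring
  have hre : α.re = (starRingEnd ℂ za * zb).re - 1 := by
    rw [hα]; simp
  have hnα : normSq α = α.re^2 + α.im^2 := by rw [normSq_apply]; ring
  rcases htype with ⟨hd, hΔ⟩ | ⟨hd, ht⟩
  · -- hyperbolic / parabolic case
    rw [hD] at hd hΔ
    rw [← hre] at hΔ
    have hm : α.im^2 ≤ normSq β := by nlinarith
    have hrne : α.re ≠ 0 := by intro h; rw [h] at hΔ; nlinarith
    refine coreA α β hβ hd hrne hm k hk f hf ?_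
    intro z hz
    have hw : mobDeriv za zb z = wgt α β z := by
      have habsD : |(1 - ‖za‖ ^ 2) * (1 - ‖zb‖ ^ 2)|
          = normSq α - normSq β := by rw [hD]; exact abs_of_pos hd
      rw [mobDeriv, wgt, hden_eq, habsD, Complex.sq_norm]
    rw [← hw, ← hmob]
    exact haut z hz
  · -- loxodromic case
    rw [hD] at hd
    have hrne : α.re ≠ 0 := by rw [hre]; intro h; apply ht; linarith
    have hd0 : normSq α - normSq β ≠ 0 := ne_of_lt hd
    set α' : ℂ := α * α + β * starRingEnd ℂ β with hα'
    set β' : ℂ := β * α + β * starRingEnd ℂ α with hβ'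
    have hβ'2 : β' = β * (((2*α.re : ℝ)):ℂ) := by
      rw [hβ', ← mul_add, Complex.add_conj]
    have hβ'ne : β' ≠ 0 := by
      rw [hβ'2]
      exact mul_ne_zero hβ (Complex.ofReal_ne_zero.mpr (by intro h; apply hrne; linarith))
    have hdetsq : normSq α' - normSq β' = (normSq α - normSq β)^2 := by
      rw [hα', hβ']
      simp only [normSq_apply, Complex.add_re, Complex.add_im, Complex.mul_re,
        Complex.mul_im, Complex.conj_re, Complex.conj_im]
      ring
    have hd' : 0 < normSq α' - normSq β' := by rw [hdetsq]; nlinarith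
    have him2 : α.im^2 < normSq β := by nlinarith
    have hα're : α'.re = α.re^2 - α.im^2 + normSq β := by
      rw [hα']
      simp only [Complex.add_re, Complex.mul_re, Complex.conj_re, Complex.conj_im,
        normSq_apply]
      ring
    have hr' : 0 < α'.re := by rw [hα're]; nlinarith
    have hα'im : α'.im = 2*α.re*α.im := by
      rw [hα']
      simp only [Complex.add_im, Complex.mul_im, Complex.conj_re, Complex.conj_im]
      ring
    have hnβ' : normSq β' = normSq β * ((2*α.re) * (2*α.re)) := by
      rw [hβ'2, normSq_mul, normSq_ofReal]
    have hm' : α'.im^2 ≤ normSq β' := by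
      rw [hα'im, hnβ']
      nlinarith [mul_nonneg (sq_nonneg (2*α.re)) (le_of_lt (sub_pos.mpr him2))]
    refine core α' β' hβ'ne hd' hr' hm' k hk f hf ?_
    intro z hz
    have hz' : normSq z = 1 := mem_sphere_iff_normSq.mp hz
    have hden : den α β z ≠ 0 := den_ne_zero hd0 hz'
    have hphiz : normSq (phi α β z) = 1 := phi_mem hd0 hz'
    have hcompden : den α' β' z = den α β (phi α β z) * den α β z := by
      rw [hα', hβ']; exact comp_den α β z hden
    have hcompphi : phi α' β' z = phi α β (phi α β z) := by
      rw [hα', hβ']; exact comp_phi α β z hden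
    have habsD : |(1 - ‖za‖ ^ 2) * (1 - ‖zb‖ ^ 2)|
        = -(normSq α - normSq β) := by rw [hD]; exact abs_of_neg hd
    have hwgt' : wgt α' β' z = mobDeriv za zb z * mobDeriv za zb (mob za zb z) := by
      rw [wgt, hcompden, normSq_mul, hdetsq, mobDeriv, mobDeriv]
      simp only [hden_eq]
      rw [hmob z, habsD]
      simp only [Complex.sq_norm]
      rw [div_mul_div_comm]
      ring
    have hmobmem : mob za zb z ∈ sphere (0:ℂ) 1 := by
      rw [hmob]; exact mem_sphere_iff_normSq.mpr hphiz
    have h1 := haut z hz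
    have h2 := haut _ hmobmem
    rw [h2] at h1
    have hfeq : f (phi α β (phi α β z)) = f (mob za zb (mob za zb z)) := by
      rw [hmob, hmob]
    rw [hwgt', hcompphi, hfeq, mul_pow, h1]
    ring
end
end
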